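/- The efficient-influence-function estimating equation is unbiased at θ₀ when the outcome model is correct: if the nuisance functions π̄_A, π̄_S are arbitrary (bounded away from 0 and 1 appropriately) but μ̄_Y(s,a,x) = E{Y|S=s,A=a,X=x} is the true outcome regression, then E[EIF(O; θ₀, η̄)] = 0, where EIF is as in Theorem 1 with normalizing constant E[SA] and θ₀ = E{Δ₁(X)−Δ₀(X)|S=1,A=1}. -/

import Mathlib

open MeasureTheory ProbabilityTheory

noncomputable def condMeanX {Ω 𝓧 : Type*} [MeasurableSpace Ω] [MeasurableSpace 𝓧]
    (μ : Measure Ω) (X : Ω → 𝓧) (E : Set Ω) (f : Ω → ℝ) : Ω → ℝ :=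
  (ProbabilityTheory.cond μ E)[f | MeasurableSpace.comap X inferInstance]

def evSA {Ω : Type*} (S A : Ω → ℝ) (s a : ℝ) : Set Ω := {ω | S ω = s ∧ A ω = a}

/-- The efficient influence function of Theorem 1, with normalizing constant `c = E[SA]`,
outcome-regression nuisances `m10, m01, m00`, propensity nuisances `pA1, pA0, pS`. -/
noncomputable def EIF {Ω : Type*} (S A Y : Ω → ℝ) (c : ℝ)
    (m10 m01 m00 pA1 pA0 pS : Ω → ℝ) (θ : ℝ) (ω : Ω) : ℝ :=
  (S ω * A ω / c) * (Y ω - m10 ω - m01 ω + m00 ω - θ)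
  - (S ω * (1 - A ω) / c) * (pA1 ω / (1 - pA1 ω)) * (Y ω - m10 ω)
  - ((1 - S ω) * A ω / c) * (pA1 ω / pA0 ω) * (pS ω / (1 - pS ω)) * (Y ω - m01 ω)
  + ((1 - S ω) * (1 - A ω) / c) * (pA1 ω / (1 - pA0 ω)) * (pS ω / (1 - pS ω))
      * (Y ω - m00 ω)

section Aux

open MeasurableSpace

variable {Ω 𝓧 : Type*} [mΩ : MeasurableSpace Ω] [MeasurableSpace 𝓧]

/-- Lift an integral of an indicator to a conditional measure. -/
lemma integral_indicator_cond (μ : Measure Ω) [IsFiniteMeasure μ] {E : Set Ω}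
    (hE : MeasurableSet E) (hE0 : μ E ≠ 0) (h : Ω → ℝ) :
    ∫ ω, E.indicator h ω ∂μ = (μ E).toReal * ∫ ω, h ω ∂(μ[|E]) := by
  simp only [ProbabilityTheory.cond]
  rw [integral_indicator hE, integral_smul_measure, smul_eq_mul, ENNReal.toReal_inv,
    ← mul_assoc, mul_inv_cancel₀, one_mul]
  exact ENNReal.toReal_ne_zero.2 ⟨hE0, measure_ne_top μ E⟩

/-- Integrability passes to conditional measures. -/
lemma integrable_cond (μ : Measure Ω) {E : Set Ω} (hE0 : μ E ≠ 0) {f : Ω → ℝ}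
    (hf : Integrable f μ) : Integrable f (μ[|E]) := by
  simp only [ProbabilityTheory.cond]
  exact (hf.restrict).smul_measure (ENNReal.inv_ne_top.2 hE0)

/-- Core orthogonality: a bounded `m`-measurable weight times the residual of a
conditional expectation integrates to zero. -/
lemma core_orth (ν : Measure Ω) [IsProbabilityMeasure ν]
    {m : MeasurableSpace Ω} (hm : m ≤ mΩ) (Y g : Ω → ℝ)
    (hY : Integrable Y ν) (hg : Measurable[m] g) (C : ℝ) (hgb : ∀ ω, |g ω| ≤ C) :
    ∫ ω, g ω * (Y ω - (ν[Y|m]) ω) ∂ν = 0 := by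
  have hgsm : StronglyMeasurable[m] g := hg.stronglyMeasurable
  have hgae : AEStronglyMeasurable[mΩ] g ν := (hg.mono hm le_rfl).aestronglyMeasurable
  have hbd : ∃ C, ∀ x, ‖g x‖ ≤ C := ⟨C, fun x => by simpa [Real.norm_eq_abs] using hgb x⟩
  have h1 : Integrable (fun ω => g ω * Y ω) ν := hY.bdd_mul hgae (Filter.Eventually.of_forall hbd.choose_spec)
  have h2 : Integrable (fun ω => g ω * (ν[Y|m]) ω) ν := integrable_condExp.bdd_mul hgae (Filter.Eventually.of_forall hbd.choose_spec)
  have hpull : ν[g * Y|m] =ᵐ[ν] g * ν[Y|m] :=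
    condExp_mul_of_stronglyMeasurable_left hgsm (by exact h1) hY
  have hkey : ∫ ω, g ω * (ν[Y|m]) ω ∂ν = ∫ ω, g ω * Y ω ∂ν := by
    calc ∫ ω, g ω * (ν[Y|m]) ω ∂ν = ∫ ω, (ν[g * Y|m]) ω ∂ν :=
          integral_congr_ae hpull.symm
      _ = ∫ ω, g ω * Y ω ∂ν := integral_condExp hm
  simp_rw [mul_sub]
  rw [integral_sub h1 h2, hkey, sub_self]

/-- One piece of the EIF integrates to zero when the outcome model is correct. -/
lemma piece_zero (μ : Measure Ω) [IsProbabilityMeasure μ] (X : Ω → 𝓧) (hX : Measurable X)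
    {E : Set Ω} (hE : MeasurableSet E) (hE0 : μ E ≠ 0) (Y m g : Ω → ℝ)
    (hY : Integrable Y (μ[|E])) (hm : m =ᵐ[μ[|E]] condMeanX μ X E Y)
    (hg : Measurable[MeasurableSpace.comap X inferInstance] g) (C : ℝ)
    (hgb : ∀ ω, |g ω| ≤ C) :
    ∫ ω, E.indicator (fun ω => g ω * (Y ω - m ω)) ω ∂μ = 0 := by
  haveI : IsProbabilityMeasure (μ[|E]) := ProbabilityTheory.cond_isProbabilityMeasure hE0
  rw [integral_indicator_cond μ hE hE0]
  have h0 : ∫ ω, g ω * (Y ω - m ω) ∂(μ[|E]) = 0 := by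
    have hcongr : (fun ω => g ω * (Y ω - m ω)) =ᵐ[μ[|E]]
        (fun ω => g ω * (Y ω - condMeanX μ X E Y ω)) := by
      filter_upwards [hm] with ω hω
      rw [hω]
    rw [integral_congr_ae hcongr]
    unfold condMeanX
    exact core_orth (μ[|E]) hX.comap_le Y g hY hg C hgb
  rw [h0, mul_zero]

end Aux

theorem stmt6
    {Ω 𝓧 : Type*} [MeasurableSpace Ω] [MeasurableSpace 𝓧]
    (μ : Measure Ω) [IsProbabilityMeasure μ]
    (S A Y : Ω → ℝ) (X : Ω → 𝓧)
    (hX : Measurable X) (hS : Measurable S) (hA : Measurable A) (hYm : Measurable Y)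
    (hSbin : ∀ ω, S ω = 0 ∨ S ω = 1) (hAbin : ∀ ω, A ω = 0 ∨ A ω = 1)
    (hYint : Integrable Y μ)
    (hpos : ∀ s a : ℝ, (s = 0 ∨ s = 1) → (a = 0 ∨ a = 1) → 0 < μ (evSA S A s a))
    (hintc : ∀ s a : ℝ, Integrable Y (μ[|evSA S A s a]))
    -- true outcome regressions μ_Y(s,a,X), measurable functions of X
    (m11 m10 m01 m00 : Ω → ℝ)
    (hm11 : Measurable[MeasurableSpace.comap X inferInstance] m11)
    (hm10 : Measurable[MeasurableSpace.comap X inferInstance] m10)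
    (hm01 : Measurable[MeasurableSpace.comap X inferInstance] m01)
    (hm00 : Measurable[MeasurableSpace.comap X inferInstance] m00)
    (hm11t : m11 =ᵐ[μ[|evSA S A 1 1]] condMeanX μ X (evSA S A 1 1) Y)
    (hm10t : m10 =ᵐ[μ[|evSA S A 1 0]] condMeanX μ X (evSA S A 1 0) Y)
    (hm01t : m01 =ᵐ[μ[|evSA S A 0 1]] condMeanX μ X (evSA S A 0 1) Y)
    (hm00t : m00 =ᵐ[μ[|evSA S A 0 0]] condMeanX μ X (evSA S A 0 0) Y)
    (hmint : Integrable m11 μ ∧ Integrable m10 μ ∧ Integrable m01 μ ∧ Integrable m00 μ)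
    -- arbitrary (possibly misspecified) propensity nuisances, measurable in X and
    -- bounded away from 0 and 1 as appropriate
    (pA1 pA0 pS : Ω → ℝ)
    (hpA1 : Measurable[MeasurableSpace.comap X inferInstance] pA1)
    (hpA0 : Measurable[MeasurableSpace.comap X inferInstance] pA0)
    (hpS : Measurable[MeasurableSpace.comap X inferInstance] pS)
    (ε : ℝ) (hε : 0 < ε)
    (hb : ∀ ω, 0 ≤ pS ω ∧ pS ω < 1 - ε ∧ ε < pA0 ω ∧ pA0 ω < 1 - ε ∧
      0 ≤ pA1 ω ∧ pA1 ω < 1 - ε) :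
    -- the EIF estimating equation is unbiased at θ₀
    ∫ ω, EIF S A Y (∫ ω, S ω * A ω ∂μ) m10 m01 m00 pA1 pA0 pS
        (∫ ω, (m11 ω - m10 ω - (m01 ω - m00 ω)) ∂(μ[|evSA S A 1 1])) ω ∂μ = 0 := by
  obtain ⟨hm11i, hm10i, hm01i, hm00i⟩ := hmint
  set c : ℝ := ∫ ω, S ω * A ω ∂μ with hc
  set θ : ℝ := ∫ ω, (m11 ω - m10 ω - (m01 ω - m00 ω)) ∂(μ[|evSA S A 1 1]) with hθ
  -- events
  have hEmeas : ∀ s a : ℝ, MeasurableSet (evSA S A s a) := fun s a =>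
    (hS (measurableSet_singleton s)).inter (hA (measurableSet_singleton a))
  have hE0 : ∀ s a : ℝ, (s = 0 ∨ s = 1) → (a = 0 ∨ a = 1) → μ (evSA S A s a) ≠ 0 :=
    fun s a hs ha => (hpos s a hs ha).ne'
  have hle : MeasurableSpace.comap X inferInstance ≤ ‹MeasurableSpace Ω› := hX.comap_le
  -- bounds on the weights
  have hratio : ∀ u v : ℝ, 0 ≤ u → u ≤ 1 → ε ≤ v → |u / v| ≤ 1 / ε := by
    intro u v hu hu1 hv
    rw [abs_of_nonneg (div_nonneg hu (le_trans hε.le hv))]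
    exact div_le_div₀ zero_le_one hu1 hε hv
  have hb10 : ∀ ω, |pA1 ω / (1 - pA1 ω)| ≤ 1 / ε := by
    intro ω; obtain ⟨h1, h2, h3, h4, h5, h6⟩ := hb ω
    exact hratio _ _ h5 (by linarith) (by linarith)
  have hb01 : ∀ ω, |pA1 ω / pA0 ω * (pS ω / (1 - pS ω))| ≤ 1 / ε * (1 / ε) := by
    intro ω; obtain ⟨h1, h2, h3, h4, h5, h6⟩ := hb ω
    rw [abs_mul]
    exact mul_le_mul (hratio _ _ h5 (by linarith) (by linarith))
      (hratio _ _ h1 (by linarith) (by linarith)) (abs_nonneg _) (by positivity)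
  have hb00 : ∀ ω, |pA1 ω / (1 - pA0 ω) * (pS ω / (1 - pS ω))| ≤ 1 / ε * (1 / ε) := by
    intro ω; obtain ⟨h1, h2, h3, h4, h5, h6⟩ := hb ω
    rw [abs_mul]
    exact mul_le_mul (hratio _ _ h5 (by linarith) (by linarith))
      (hratio _ _ h1 (by linarith) (by linarith)) (abs_nonneg _) (by positivity)
  -- measurability of the weights with respect to σ(X)
  have hwm10 : Measurable[MeasurableSpace.comap X inferInstance]
      (fun ω => pA1 ω / (1 - pA1 ω)) := hpA1.div (measurable_const.sub hpA1)
  have hwm01 : Measurable[MeasurableSpace.comap X inferInstance]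
      (fun ω => pA1 ω / pA0 ω * (pS ω / (1 - pS ω))) :=
    (hpA1.div hpA0).mul (hpS.div (measurable_const.sub hpS))
  have hwm00 : Measurable[MeasurableSpace.comap X inferInstance]
      (fun ω => pA1 ω / (1 - pA0 ω) * (pS ω / (1 - pS ω))) :=
    (hpA1.div (measurable_const.sub hpA0)).mul (hpS.div (measurable_const.sub hpS))
  -- integrability of the five pieces
  have hInt1 : Integrable ((evSA S A 1 1).indicator (fun ω => Y ω - m11 ω)) μ :=
    (hYint.sub hm11i).indicator (hEmeas 1 1)
  have hInt2 : Integrable ((evSA S A 1 1).indicator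
      (fun ω => (m11 ω - m10 ω - (m01 ω - m00 ω)) - θ)) μ :=
    (((hm11i.sub hm10i).sub (hm01i.sub hm00i)).sub (integrable_const θ)).indicator (hEmeas 1 1)
  have hInt3 : Integrable ((evSA S A 1 0).indicator
      (fun ω => pA1 ω / (1 - pA1 ω) * (Y ω - m10 ω))) μ :=
    ((hYint.sub hm10i).bdd_mul ((hwm10.mono hle le_rfl).aestronglyMeasurable)
      (Filter.Eventually.of_forall fun x => by rw [Real.norm_eq_abs]; exact hb10 x)).indicator (hEmeas 1 0)
  have hInt4 : Integrable ((evSA S A 0 1).indicator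
      (fun ω => pA1 ω / pA0 ω * (pS ω / (1 - pS ω)) * (Y ω - m01 ω))) μ :=
    ((hYint.sub hm01i).bdd_mul ((hwm01.mono hle le_rfl).aestronglyMeasurable)
      (Filter.Eventually.of_forall fun x => by rw [Real.norm_eq_abs]; exact hb01 x)).indicator (hEmeas 0 1)
  have hInt5 : Integrable ((evSA S A 0 0).indicator
      (fun ω => pA1 ω / (1 - pA0 ω) * (pS ω / (1 - pS ω)) * (Y ω - m00 ω))) μ :=
    ((hYint.sub hm00i).bdd_mul ((hwm00.mono hle le_rfl).aestronglyMeasurable)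
      (Filter.Eventually.of_forall fun x => by rw [Real.norm_eq_abs]; exact hb00 x)).indicator (hEmeas 0 0)
  -- each piece integrates to zero
  have Z1 : ∫ ω, (evSA S A 1 1).indicator (fun ω => Y ω - m11 ω) ω ∂μ = 0 := by
    have heq : (evSA S A 1 1).indicator (fun ω => Y ω - m11 ω)
        = (evSA S A 1 1).indicator (fun ω => (1 : ℝ) * (Y ω - m11 ω)) := by
      funext ω; simp [Set.indicator_apply]
    rw [heq]
    exact piece_zero μ X hX (hEmeas 1 1) (hE0 1 1 (Or.inr rfl) (Or.inr rfl)) Y m11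
      (fun _ => (1 : ℝ)) (hintc 1 1) hm11t measurable_const 1 (by norm_num)
  have Z2 : ∫ ω, (evSA S A 1 1).indicator
      (fun ω => (m11 ω - m10 ω - (m01 ω - m00 ω)) - θ) ω ∂μ = 0 := by
    have h110 := hE0 1 1 (Or.inr rfl) (Or.inr rfl)
    haveI : IsProbabilityMeasure (μ[|evSA S A 1 1]) :=
      ProbabilityTheory.cond_isProbabilityMeasure h110
    rw [integral_indicator_cond μ (hEmeas 1 1) h110]
    have hint : Integrable (fun ω => m11 ω - m10 ω - (m01 ω - m00 ω)) (μ[|evSA S A 1 1]) :=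
      ((integrable_cond μ h110 hm11i).sub (integrable_cond μ h110 hm10i)).sub
        ((integrable_cond μ h110 hm01i).sub (integrable_cond μ h110 hm00i))
    rw [integral_sub hint (integrable_const θ), integral_const]
    simp [← hθ]
  have Z3 : ∫ ω, (evSA S A 1 0).indicator
      (fun ω => pA1 ω / (1 - pA1 ω) * (Y ω - m10 ω)) ω ∂μ = 0 :=
    piece_zero μ X hX (hEmeas 1 0) (hE0 1 0 (Or.inr rfl) (Or.inl rfl)) Y m10
      (fun ω => pA1 ω / (1 - pA1 ω)) (hintc 1 0) hm10t hwm10 (1 / ε) hb10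
  have Z4 : ∫ ω, (evSA S A 0 1).indicator
      (fun ω => pA1 ω / pA0 ω * (pS ω / (1 - pS ω)) * (Y ω - m01 ω)) ω ∂μ = 0 :=
    piece_zero μ X hX (hEmeas 0 1) (hE0 0 1 (Or.inl rfl) (Or.inr rfl)) Y m01
      (fun ω => pA1 ω / pA0 ω * (pS ω / (1 - pS ω))) (hintc 0 1) hm01t hwm01
      (1 / ε * (1 / ε)) hb01
  have Z5 : ∫ ω, (evSA S A 0 0).indicator
      (fun ω => pA1 ω / (1 - pA0 ω) * (pS ω / (1 - pS ω)) * (Y ω - m00 ω)) ω ∂μ = 0 :=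
    piece_zero μ X hX (hEmeas 0 0) (hE0 0 0 (Or.inl rfl) (Or.inl rfl)) Y m00
      (fun ω => pA1 ω / (1 - pA0 ω) * (pS ω / (1 - pS ω))) (hintc 0 0) hm00t hwm00
      (1 / ε * (1 / ε)) hb00
  -- pointwise decomposition of the EIF
  have hpt : ∀ ω, EIF S A Y c m10 m01 m00 pA1 pA0 pS θ ω
      = c⁻¹ * ((evSA S A 1 1).indicator (fun ω => Y ω - m11 ω) ω
        + (evSA S A 1 1).indicator (fun ω => (m11 ω - m10 ω - (m01 ω - m00 ω)) - θ) ω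
        - (evSA S A 1 0).indicator (fun ω => pA1 ω / (1 - pA1 ω) * (Y ω - m10 ω)) ω
        - (evSA S A 0 1).indicator
            (fun ω => pA1 ω / pA0 ω * (pS ω / (1 - pS ω)) * (Y ω - m01 ω)) ω
        + (evSA S A 0 0).indicator
            (fun ω => pA1 ω / (1 - pA0 ω) * (pS ω / (1 - pS ω)) * (Y ω - m00 ω)) ω) := by
    intro ω
    rcases hSbin ω with hs | hs <;> rcases hAbin ω with ha | ha <;>
      simp only [EIF, Set.indicator_apply, evSA, Set.mem_setOf_eq, hs, ha, one_ne_zero,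
        zero_ne_one, and_true, and_false, true_and, false_and, and_self, if_true, if_false,
        ite_true, ite_false, eq_self_iff_true] <;> ring
  calc ∫ ω, EIF S A Y c m10 m01 m00 pA1 pA0 pS θ ω ∂μ
      = ∫ ω, c⁻¹ * ((evSA S A 1 1).indicator (fun ω => Y ω - m11 ω) ω
        + (evSA S A 1 1).indicator (fun ω => (m11 ω - m10 ω - (m01 ω - m00 ω)) - θ) ω
        - (evSA S A 1 0).indicator (fun ω => pA1 ω / (1 - pA1 ω) * (Y ω - m10 ω)) ω
        - (evSA S A 0 1).indicator
            (fun ω => pA1 ω / pA0 ω * (pS ω / (1 - pS ω)) * (Y ω - m01 ω)) ω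
        + (evSA S A 0 0).indicator
            (fun ω => pA1 ω / (1 - pA0 ω) * (pS ω / (1 - pS ω)) * (Y ω - m00 ω)) ω) ∂μ :=
        integral_congr_ae (Filter.Eventually.of_forall hpt)
    _ = 0 := by
        have g1 : Integrable (fun ω => (evSA S A 1 1).indicator (fun ω => Y ω - m11 ω) ω) μ :=
          hInt1
        have g2 : Integrable (fun ω => (evSA S A 1 1).indicator
            (fun ω => (m11 ω - m10 ω - (m01 ω - m00 ω)) - θ) ω) μ := hInt2
        have g3 : Integrable (fun ω => (evSA S A 1 0).indicator
            (fun ω => pA1 ω / (1 - pA1 ω) * (Y ω - m10 ω)) ω) μ := hInt3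
        have g4 : Integrable (fun ω => (evSA S A 0 1).indicator
            (fun ω => pA1 ω / pA0 ω * (pS ω / (1 - pS ω)) * (Y ω - m01 ω)) ω) μ := hInt4
        have g5 : Integrable (fun ω => (evSA S A 0 0).indicator
            (fun ω => pA1 ω / (1 - pA0 ω) * (pS ω / (1 - pS ω)) * (Y ω - m00 ω)) ω) μ := hInt5
        have g12 : Integrable (fun ω => (evSA S A 1 1).indicator (fun ω => Y ω - m11 ω) ω
            + (evSA S A 1 1).indicator (fun ω => (m11 ω - m10 ω - (m01 ω - m00 ω)) - θ) ω) μ :=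
          g1.add g2
        have g123 : Integrable (fun ω => (evSA S A 1 1).indicator (fun ω => Y ω - m11 ω) ω
            + (evSA S A 1 1).indicator (fun ω => (m11 ω - m10 ω - (m01 ω - m00 ω)) - θ) ω
            - (evSA S A 1 0).indicator (fun ω => pA1 ω / (1 - pA1 ω) * (Y ω - m10 ω)) ω) μ :=
          g12.sub g3
        have g1234 : Integrable (fun ω => (evSA S A 1 1).indicator (fun ω => Y ω - m11 ω) ω
            + (evSA S A 1 1).indicator (fun ω => (m11 ω - m10 ω - (m01 ω - m00 ω)) - θ) ω
            - (evSA S A 1 0).indicator (fun ω => pA1 ω / (1 - pA1 ω) * (Y ω - m10 ω)) ω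
            - (evSA S A 0 1).indicator
                (fun ω => pA1 ω / pA0 ω * (pS ω / (1 - pS ω)) * (Y ω - m01 ω)) ω) μ :=
          g123.sub g4
        rw [integral_const_mul, integral_add g1234 g5, integral_sub g123 g4,
          integral_sub g12 g3, integral_add g1 g2, Z1, Z2, Z3, Z4, Z5]
        norm_num
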